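/- Let (Ω, 𝓕, μ) be a probability space and let ξ : ℕ × ℕ → Ω → ℝ be an independent family of random variables each with standard Gaussian law N(0,1). Then for μ-almost every ω, the series Σ_{n=1}^∞ sup_{t ∈ [0,1]} |Σ_{k=0}^{2^(n−1)−1} Φ_{n,k}(t)·ξ_{n,k}(ω)| converges; consequently the partial sums Φ_{0,0}(t)·ξ_{0,0}(ω) + Σ_{n=1}^N Σ_k Φ_{n,k}(t)·ξ_{n,k}(ω) converge uniformly on [0,1] as N → ∞, and the limit function t ↦ U_t(ω) is continuous. -/

import Mathlib

open MeasureTheory ProbabilityTheory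

/-- The Haar-like basis element `Φ_{n,k}` for the Ornstein–Uhlenbeck process with
diffusion coefficient `Γ` and drift coefficient `α` (`Φ_{0,0}` for `n = 0`). -/
noncomputable def Phi (Γ α : ℝ) (n k : ℕ) (t : ℝ) : ℝ :=
  if n = 0 then
    Real.sqrt (Γ / α) * Real.exp (-α / 2) * Real.sinh (α * t) / Real.sqrt (Real.sinh α)
  else if 2 * (k : ℝ) * 2 ^ (-(n : ℤ)) ≤ t ∧ t ≤ (2 * (k : ℝ) + 1) * 2 ^ (-(n : ℤ)) then
    Real.sqrt (Γ / α) * Real.sinh (α * (t - 2 * (k : ℝ) * 2 ^ (-(n : ℤ)))) /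
      Real.sqrt (Real.sinh (α * 2 ^ (-(n : ℤ) + 1)))
  else if (2 * (k : ℝ) + 1) * 2 ^ (-(n : ℤ)) ≤ t ∧ t ≤ 2 * ((k : ℝ) + 1) * 2 ^ (-(n : ℤ)) then
    Real.sqrt (Γ / α) * Real.sinh (α * (2 * ((k : ℝ) + 1) * 2 ^ (-(n : ℤ)) - t)) /
      Real.sqrt (Real.sinh (α * 2 ^ (-(n : ℤ) + 1)))
  else 0

/-- Closed form of `Phi` for positive levels: a clipped/truncated hyperbolic tent function. -/
lemma phi_eq (Γ : ℝ) {α : ℝ} (hα : 0 < α) {n : ℕ} (hn : n ≠ 0) (k : ℕ) (t : ℝ) :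
    Phi Γ α n k t =
      Real.sqrt (Γ / α) *
        max 0 (min (Real.sinh (α * (t - 2 * (k : ℝ) * 2 ^ (-(n : ℤ)))))
          (Real.sinh (α * (2 * ((k : ℝ) + 1) * 2 ^ (-(n : ℤ)) - t)))) /
        Real.sqrt (Real.sinh (α * 2 ^ (-(n : ℤ) + 1))) := by
  have hh : (0:ℝ) < 2 ^ (-(n : ℤ)) := by positivity
  set h : ℝ := 2 ^ (-(n : ℤ)) with hh_def
  unfold Phi
  rw [if_neg hn]
  by_cases h1 : 2 * (k : ℝ) * h ≤ t ∧ t ≤ (2 * (k : ℝ) + 1) * h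
  · rw [if_pos h1]
    congr 2
    have hAB : α * (t - 2 * (k : ℝ) * h) ≤ α * (2 * ((k : ℝ) + 1) * h - t) := by
      apply mul_le_mul_of_nonneg_left _ hα.le
      nlinarith [h1.1, h1.2]
    rw [min_eq_left (Real.sinh_le_sinh.2 hAB),
      max_eq_right (Real.sinh_nonneg_iff.2 (by nlinarith [h1.1]))]
  · rw [if_neg h1]
    by_cases h2 : (2 * (k : ℝ) + 1) * h ≤ t ∧ t ≤ 2 * ((k : ℝ) + 1) * h
    · rw [if_pos h2]
      congr 2
      have hBA : α * (2 * ((k : ℝ) + 1) * h - t) ≤ α * (t - 2 * (k : ℝ) * h) := by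
        apply mul_le_mul_of_nonneg_left _ hα.le
        nlinarith [h2.1, h2.2]
      rw [min_eq_right (Real.sinh_le_sinh.2 hBA),
        max_eq_right (Real.sinh_nonneg_iff.2 (by nlinarith [h2.2]))]
    · rw [if_neg h2]
      push_neg at h1 h2
      have : min (Real.sinh (α * (t - 2 * (k : ℝ) * h)))
          (Real.sinh (α * (2 * ((k : ℝ) + 1) * h - t))) ≤ 0 := by
        rcases lt_or_ge t (2 * (k : ℝ) * h) with ht | ht
        · exact le_trans (min_le_left _ _)
            (Real.sinh_nonpos_iff.2 (by nlinarith))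
        · have ht2 : (2 * (k : ℝ) + 1) * h < t := h1 ht
          have ht3 : 2 * ((k : ℝ) + 1) * h < t := h2 ht2.le
          exact le_trans (min_le_right _ _)
            (Real.sinh_nonpos_iff.2 (by nlinarith))
      rw [max_eq_left this, mul_zero, zero_div]

lemma phi_nonneg (Γ : ℝ) {α : ℝ} (hα : 0 < α) {n : ℕ} (hn : n ≠ 0) (k : ℕ) (t : ℝ) :
    0 ≤ Phi Γ α n k t := by
  rw [phi_eq Γ hα hn k t]
  positivity

lemma sqrt_pow' {x : ℝ} (hx : 0 ≤ x) (n : ℕ) : Real.sqrt (x ^ n) = (Real.sqrt x) ^ n := by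
  induction n with
  | zero => simp
  | succ n ih => rw [pow_succ, pow_succ, Real.sqrt_mul (pow_nonneg hx n), ih]

lemma sinh_le_mul_exp {x c : ℝ} (hx : 0 ≤ x) (hxc : x ≤ c) :
    Real.sinh x ≤ x * Real.exp c := by
  rw [Real.sinh_eq]
  have h1 : 1 - x ≤ Real.exp (-x) := by nlinarith [Real.add_one_le_exp (-x)]
  have h2 : Real.exp x * Real.exp (-x) = 1 := by rw [← Real.exp_add]; simp
  have h3 : Real.exp x ≤ Real.exp c := Real.exp_le_exp.2 hxc
  have h4 : (0:ℝ) < Real.exp x := Real.exp_pos x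
  have h5 : (1:ℝ) ≤ Real.exp c := Real.one_le_exp (hx.trans hxc)
  nlinarith [mul_le_mul_of_nonneg_left h1 h4.le]

lemma phi_le (Γ : ℝ) {α : ℝ} (hΓ : 0 < Γ) (hα : 0 < α) (n k : ℕ) (t : ℝ) :
    Phi Γ α (n + 1) k t ≤
      Real.sqrt (Γ * Real.exp α) * ((Real.sqrt 2)⁻¹) ^ n := by
  have hn : n + 1 ≠ 0 := Nat.succ_ne_zero n
  rw [phi_eq Γ hα hn k t]
  have hcast : (-((n+1 : ℕ) : ℤ) + 1 : ℤ) = -(n:ℤ) := by push_cast; ring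
  rw [hcast]
  set x : ℝ := α * 2 ^ (-(n:ℤ)) with hx_def
  have hxpos : 0 < x := by positivity
  have hxle : x ≤ α := by
    rw [hx_def]
    calc α * 2 ^ (-(n:ℤ)) ≤ α * 1 := by
          apply mul_le_mul_of_nonneg_left _ hα.le
          apply zpow_le_one_of_nonpos₀ (by norm_num) (by simp)
      _ = α := mul_one α
  have hmax : max 0 (min (Real.sinh (α * (t - 2 * (k : ℝ) * 2 ^ (-((n+1:ℕ) : ℤ)))))
      (Real.sinh (α * (2 * ((k : ℝ) + 1) * 2 ^ (-((n+1:ℕ) : ℤ)) - t)))) ≤ Real.sinh x := by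
    apply max_le (Real.sinh_nonneg_iff.2 hxpos.le)
    rcases le_or_gt (Real.sinh (α * (2 * ((k : ℝ) + 1) * 2 ^ (-((n+1:ℕ) : ℤ)) - t))) 0 with hB | hB
    · exact le_trans (min_le_right _ _) (hB.trans (Real.sinh_nonneg_iff.2 hxpos.le))
    · refine le_trans (min_le_left _ _) (Real.sinh_le_sinh.2 ?_)
      have hBarg : 0 < α * (2 * ((k : ℝ) + 1) * 2 ^ (-((n+1:ℕ) : ℤ)) - t) :=
        Real.sinh_pos_iff.1 hB
      have h2 : (2:ℝ) * 2 ^ (-((n+1:ℕ) : ℤ)) = 2 ^ (-(n:ℤ)) := by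
        rw [mul_comm, ← zpow_add_one₀ (two_ne_zero : (2:ℝ) ≠ 0)]
        congr 1
      rcases mul_pos_iff.1 hBarg with ⟨_, hpos⟩ | ⟨hneg, _⟩
      · rw [hx_def]
        apply mul_le_mul_of_nonneg_left _ hα.le
        nlinarith [hpos, h2]
      · linarith
  have hsinhx : 0 < Real.sinh x := Real.sinh_pos_iff.2 hxpos
  have hxval : x = α * ((2:ℝ)^n)⁻¹ := by rw [hx_def, zpow_neg, zpow_natCast]
  calc Real.sqrt (Γ / α) *
        max 0 (min (Real.sinh (α * (t - 2 * (k : ℝ) * 2 ^ (-((n+1:ℕ) : ℤ)))))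
          (Real.sinh (α * (2 * ((k : ℝ) + 1) * 2 ^ (-((n+1:ℕ) : ℤ)) - t)))) /
        Real.sqrt (Real.sinh x)
      ≤ Real.sqrt (Γ / α) * Real.sinh x / Real.sqrt (Real.sinh x) := by gcongr
    _ = Real.sqrt (Γ / α) * Real.sqrt (Real.sinh x) := by
        rw [mul_div_assoc, Real.div_sqrt]
    _ = Real.sqrt (Γ / α * Real.sinh x) := (Real.sqrt_mul (by positivity) _).symm
    _ ≤ Real.sqrt (Γ * Real.exp α * ((2:ℝ)^n)⁻¹) := by
        apply Real.sqrt_le_sqrt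
        calc Γ / α * Real.sinh x ≤ Γ / α * (x * Real.exp α) :=
              mul_le_mul_of_nonneg_left (sinh_le_mul_exp hxpos.le hxle) (by positivity)
          _ = Γ * Real.exp α * ((2:ℝ)^n)⁻¹ := by
              rw [hxval]; field_simp
    _ = Real.sqrt (Γ * Real.exp α) * ((Real.sqrt 2)⁻¹) ^ n := by
        rw [Real.sqrt_mul (by positivity), Real.sqrt_inv, sqrt_pow' (by norm_num : (0:ℝ) ≤ 2),
          inv_pow]

lemma phi_support (Γ : ℝ) {α : ℝ} (hα : 0 < α) {n k : ℕ} {t : ℝ} (hn : n ≠ 0)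
    (h : Phi Γ α n k t ≠ 0) :
    2 * (k : ℝ) * 2 ^ (-(n : ℤ)) < t ∧ t < 2 * ((k : ℝ) + 1) * 2 ^ (-(n : ℤ)) := by
  rw [phi_eq Γ hα hn k t] at h
  set A := Real.sinh (α * (t - 2 * (k : ℝ) * 2 ^ (-(n : ℤ)))) with hA
  set B := Real.sinh (α * (2 * ((k : ℝ) + 1) * 2 ^ (-(n : ℤ)) - t)) with hB
  have hm : 0 < min A B := by
    by_contra hc
    push_neg at hc
    rw [max_eq_left hc, mul_zero, zero_div] at h
    exact h rfl
  have hA' := Real.sinh_pos_iff.1 (lt_of_lt_of_le hm (min_le_left _ _))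
  have hB' := Real.sinh_pos_iff.1 (lt_of_lt_of_le hm (min_le_right _ _))
  constructor
  · rcases mul_pos_iff.1 hA' with ⟨_, hp⟩ | ⟨hneg, _⟩
    · linarith
    · linarith
  · rcases mul_pos_iff.1 hB' with ⟨_, hp⟩ | ⟨hneg, _⟩
    · linarith
    · linarith

lemma sum_phi_le (Γ : ℝ) {α : ℝ} (hΓ : 0 < Γ) (hα : 0 < α) (n : ℕ) (t : ℝ) :
    ∑ k ∈ Finset.range (2 ^ n), Phi Γ α (n + 1) k t ≤
      Real.sqrt (Γ * Real.exp α) * ((Real.sqrt 2)⁻¹) ^ n := by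
  have hC : (0:ℝ) ≤ Real.sqrt (Γ * Real.exp α) * ((Real.sqrt 2)⁻¹) ^ n := by positivity
  by_cases hex : ∃ k0 ∈ Finset.range (2 ^ n), Phi Γ α (n + 1) k0 t ≠ 0
  · obtain ⟨k0, hk0m, hk0⟩ := hex
    have huniq : ∀ k ∈ Finset.range (2 ^ n), k ≠ k0 → Phi Γ α (n + 1) k t = 0 := by
      intro k hk hne
      by_contra hc
      have h1 := phi_support Γ hα (Nat.succ_ne_zero n) hc
      have h2 := phi_support Γ hα (Nat.succ_ne_zero n) hk0
      have hh : (0:ℝ) < 2 ^ (-((n + 1 : ℕ) : ℤ)) := by positivity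
      have e1 : (k:ℝ) < (k0:ℝ) + 1 := by nlinarith [h1.1, h2.2]
      have e2 : (k0:ℝ) < (k:ℝ) + 1 := by nlinarith [h2.1, h1.2]
      have e1' : k < k0 + 1 := by
        exact_mod_cast (by push_cast; linarith : (k:ℝ) < ((k0 + 1 : ℕ) : ℝ))
      have e2' : k0 < k + 1 := by
        exact_mod_cast (by push_cast; linarith : (k0:ℝ) < ((k + 1 : ℕ) : ℝ))
      omega
    rw [Finset.sum_eq_single_of_mem k0 hk0m huniq]
    exact phi_le Γ hΓ hα n k0 t
  · push_neg at hex
    rw [Finset.sum_eq_zero hex]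
    exact hC

lemma phi_continuous (Γ : ℝ) {α : ℝ} (hα : 0 < α) (n k : ℕ) : Continuous (Phi Γ α n k) := by
  rcases Nat.eq_zero_or_pos n with hn | hn
  · subst hn
    unfold Phi
    simp only [if_pos rfl]
    exact (continuous_const.mul
      (Real.continuous_sinh.comp (continuous_const.mul continuous_id))).div_const _
  · have hn' : n ≠ 0 := hn.ne'
    rw [funext (phi_eq Γ hα hn' k)]
    apply Continuous.div_const
    apply continuous_const.mul
    apply Continuous.max continuous_const
    exact Continuous.min
      (Real.continuous_sinh.comp (continuous_const.mul (continuous_id.sub continuous_const)))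
      (Real.continuous_sinh.comp (continuous_const.mul (continuous_const.sub continuous_id)))

lemma phi0_le (Γ : ℝ) {α : ℝ} (hΓ : 0 < Γ) (hα : 0 < α) {t : ℝ} (ht : t ∈ Set.Icc (0:ℝ) 1) :
    |Phi Γ α 0 0 t| ≤
      Real.sqrt (Γ / α) * Real.exp (-α / 2) * Real.sinh α / Real.sqrt (Real.sinh α) := by
  unfold Phi
  simp only [↓reduceIte]
  rw [abs_div, abs_mul, abs_mul, abs_of_nonneg (Real.sqrt_nonneg _),
    abs_of_nonneg (Real.exp_pos _).le, abs_of_nonneg (Real.sqrt_nonneg _)]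
  have hsinh : |Real.sinh (α * t)| ≤ Real.sinh α := by
    rw [abs_of_nonneg (Real.sinh_nonneg_iff.2 (by nlinarith [ht.1]))]
    exact Real.sinh_le_sinh.2 (by nlinarith [ht.2])
  have hd : (0:ℝ) < Real.sqrt (Real.sinh α) := Real.sqrt_pos.2 (Real.sinh_pos_iff.2 hα)
  gcongr

open Real in
lemma gauss_tail {a : ℝ} (ha : 0 ≤ a) :
    gaussianReal 0 1 {x : ℝ | a < |x|} ≤
      ENNReal.ofReal (Real.sqrt 2 * Real.exp (-(a ^ 2) / 4)) := by
  rw [gaussianReal_apply 0 one_ne_zero]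
  have key : ∀ x : ℝ, x ∈ {x : ℝ | a < |x|} →
      gaussianPDF 0 1 x ≤
        ENNReal.ofReal (Real.exp (-(a ^ 2) / 4) * ((Real.sqrt (2 * π))⁻¹ *
          Real.exp (-(4⁻¹) * x ^ 2))) := by
    intro x hx
    rw [gaussianPDF_def]
    apply ENNReal.ofReal_le_ofReal
    have hx' : a < |x| := hx
    have hsq : a ^ 2 ≤ x ^ 2 := by
      nlinarith [abs_nonneg x, sq_abs x, hx']
    unfold gaussianPDFReal
    push_cast
    simp only [mul_one, sub_zero]
    have hexp : Real.exp (-x ^ 2 / 2) ≤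
        Real.exp (-(a ^ 2) / 4) * Real.exp (-(4⁻¹) * x ^ 2) := by
      rw [← Real.exp_add]
      apply Real.exp_le_exp.2
      nlinarith
    calc (Real.sqrt (2 * π))⁻¹ * Real.exp (-x ^ 2 / 2)
        ≤ (Real.sqrt (2 * π))⁻¹ * (Real.exp (-(a ^ 2) / 4) * Real.exp (-(4⁻¹) * x ^ 2)) :=
          mul_le_mul_of_nonneg_left hexp (by positivity)
      _ = Real.exp (-(a ^ 2) / 4) * ((Real.sqrt (2 * π))⁻¹ * Real.exp (-(4⁻¹) * x ^ 2)) := by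
          ring
  calc ∫⁻ x in {x : ℝ | a < |x|}, gaussianPDF 0 1 x
      ≤ ∫⁻ x in {x : ℝ | a < |x|}, ENNReal.ofReal (Real.exp (-(a ^ 2) / 4) *
          ((Real.sqrt (2 * π))⁻¹ * Real.exp (-(4⁻¹) * x ^ 2))) := by
        apply setLIntegral_mono
        · exact (measurable_const.mul
            ((Real.measurable_exp.comp ((measurable_const.mul (measurable_id.pow_const 2))))
              |>.const_mul _)).ennreal_ofReal
        · exact key
    _ ≤ ∫⁻ x : ℝ, ENNReal.ofReal (Real.exp (-(a ^ 2) / 4) *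
          ((Real.sqrt (2 * π))⁻¹ * Real.exp (-(4⁻¹) * x ^ 2))) :=
        setLIntegral_le_lintegral _ _
    _ = ENNReal.ofReal (∫ x : ℝ, Real.exp (-(a ^ 2) / 4) *
          ((Real.sqrt (2 * π))⁻¹ * Real.exp (-(4⁻¹) * x ^ 2))) := by
        rw [← ofReal_integral_eq_lintegral_ofReal]
        · exact (((integrable_exp_neg_mul_sq (by norm_num : (0:ℝ) < 4⁻¹)).const_mul
            _).const_mul _)
        · exact Filter.Eventually.of_forall fun x => by positivity
    _ ≤ ENNReal.ofReal (Real.sqrt 2 * Real.exp (-(a ^ 2) / 4)) := by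
        apply ENNReal.ofReal_le_ofReal
        rw [MeasureTheory.integral_const_mul, MeasureTheory.integral_const_mul,
          integral_gaussian]
        have h4 : (π / 4⁻¹ : ℝ) = 2 * (2 * π) := by ring
        rw [h4]
        have hπ : (0:ℝ) < π := Real.pi_pos
        have e : ((Real.sqrt 2 * Real.sqrt π)⁻¹ * Real.sqrt (2 * (2 * π))) = Real.sqrt 2 := by
          rw [Real.sqrt_mul (by norm_num : (0:ℝ) ≤ 2) (2 * π),
            Real.sqrt_mul (by norm_num : (0:ℝ) ≤ 2) π]
          have h2 : (0:ℝ) < Real.sqrt 2 := Real.sqrt_pos.2 (by norm_num)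
          have hp : (0:ℝ) < Real.sqrt π := Real.sqrt_pos.2 hπ
          field_simp
        rw [Real.sqrt_mul (by norm_num : (0:ℝ) ≤ 2) π, e, mul_comm]

/-- Almost-sure normal convergence of the Haar-like expansion of the Ornstein–Uhlenbeck
process. -/
theorem ou_series_ae_uniform_convergence
    {Ω : Type*} [MeasurableSpace Ω] (μ : Measure Ω) [IsProbabilityMeasure μ]
    (Γ α : ℝ) (hΓ : 0 < Γ) (hα : 0 < α)
    (ξ : ℕ × ℕ → Ω → ℝ) (hmeas : ∀ p, Measurable (ξ p))
    (hindep : iIndepFun ξ μ)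
    (hgauss : ∀ p, μ.map (ξ p) = gaussianReal 0 1) :
    ∀ᵐ ω ∂μ,
      Summable (fun n : ℕ =>
        ⨆ t ∈ Set.Icc (0 : ℝ) 1,
          |∑ k ∈ Finset.range (2 ^ n), Phi Γ α (n + 1) k t * ξ (n + 1, k) ω|) ∧
      ∃ U : ℝ → ℝ, ContinuousOn U (Set.Icc (0 : ℝ) 1) ∧
        TendstoUniformlyOn
          (fun N t => ∑ n ∈ Finset.range (N + 1),
            ∑ k ∈ Finset.range (2 ^ (n - 1)), Phi Γ α n k t * ξ (n, k) ω)
          U Filter.atTop (Set.Icc (0 : ℝ) 1) := by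
  classical
  have htail : ∀ (p : ℕ × ℕ) (a : ℝ), 0 ≤ a →
      μ {ω | a < |ξ p ω|} ≤ ENNReal.ofReal (Real.sqrt 2 * Real.exp (-(a ^ 2) / 4)) := by
    intro p a ha
    have hms : MeasurableSet {x : ℝ | a < |x|} :=
      measurableSet_lt measurable_const continuous_abs.measurable
    have hset : {ω | a < |ξ p ω|} = ξ p ⁻¹' {x : ℝ | a < |x|} := rfl
    rw [hset, ← Measure.map_apply (hmeas p) hms, hgauss p]
    exact gauss_tail ha
  have haseq_nonneg : ∀ n : ℕ, 0 ≤ 4 * Real.sqrt ((n : ℝ) + 1) := fun n => by positivity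
  set aseq : ℕ → ℝ := fun n => 4 * Real.sqrt ((n : ℝ) + 1) with haseq
  set S : ℕ → Set Ω :=
    fun n => ⋃ k ∈ Finset.range (2 ^ n), {ω | aseq n < |ξ (n + 1, k) ω|} with hS
  have hSle : ∀ n, μ (S n) ≤
      ENNReal.ofReal ((Real.sqrt 2 * Real.exp (-4)) * (2 * Real.exp (-4)) ^ n) := by
    intro n
    refine (measure_biUnion_finset_le _ _).trans ?_
    have hone : ∀ k ∈ Finset.range (2 ^ n),
        μ {ω | aseq n < |ξ (n + 1, k) ω|} ≤
          ENNReal.ofReal (Real.sqrt 2 * Real.exp (-(aseq n ^ 2) / 4)) :=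
      fun k _ => htail _ _ (haseq_nonneg n)
    refine (Finset.sum_le_sum hone).trans ?_
    rw [Finset.sum_const, Finset.card_range, nsmul_eq_mul]
    rw [show ((2 ^ n : ℕ) : ENNReal) = ENNReal.ofReal ((2:ℝ) ^ n) by
      rw [← ENNReal.ofReal_natCast (2 ^ n)]; congr 1; push_cast; ring]
    rw [← ENNReal.ofReal_mul (by positivity)]
    apply ENNReal.ofReal_le_ofReal
    have hsq : aseq n ^ 2 = 16 * ((n:ℝ) + 1) := by
      simp only [haseq]
      rw [mul_pow, Real.sq_sqrt (by positivity)]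
      ring
    rw [hsq]
    have hexp : Real.exp (-(16 * ((n:ℝ) + 1)) / 4) = Real.exp (-4) * Real.exp (-4) ^ n := by
      rw [← Real.exp_nat_mul, ← Real.exp_add]
      congr 1
      push_cast
      ring
    rw [hexp, mul_pow]
    apply le_of_eq
    ring
  have hSsum : (∑' n, μ (S n)) ≠ ⊤ := by
    have hlt1 : (2:ℝ) * Real.exp (-4) < 1 := by
      have h24 : (2:ℝ) < Real.exp 4 := by nlinarith [Real.add_one_le_exp (4:ℝ)]
      rw [Real.exp_neg]
      have hp : (0:ℝ) < Real.exp 4 := Real.exp_pos 4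
      rw [mul_inv_lt_iff₀ hp]
      linarith
    have hb : Summable (fun n : ℕ =>
        (Real.sqrt 2 * Real.exp (-4)) * (2 * Real.exp (-4)) ^ n) :=
      (summable_geometric_of_lt_one (by positivity) hlt1).mul_left _
    have hle := ENNReal.tsum_le_tsum hSle
    rw [← ENNReal.ofReal_tsum_of_nonneg (fun n => by positivity) hb] at hle
    exact ne_top_of_le_ne_top ENNReal.ofReal_ne_top hle
  filter_upwards [MeasureTheory.ae_eventually_notMem hSsum] with ω hω
  obtain ⟨N0, hN0⟩ := Filter.eventually_atTop.1 hω
  have hξle : ∀ n, N0 ≤ n → ∀ k < 2 ^ n, |ξ (n + 1, k) ω| ≤ aseq n := by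
    intro n hn k hk
    by_contra hcon
    push_neg at hcon
    exact hN0 n hn (Set.mem_biUnion (Finset.mem_range.2 hk) hcon)
  have hC0 : (0:ℝ) ≤ Real.sqrt (Γ * Real.exp α) := Real.sqrt_nonneg _
  set C : ℝ := Real.sqrt (Γ * Real.exp α) with hCdef
  set r : ℝ := (Real.sqrt 2)⁻¹ with hrdef
  have hr0 : (0:ℝ) ≤ r := by positivity
  have hrange : ∀ n : ℕ, (Finset.range (2 ^ n)).Nonempty :=
    fun n => ⟨0, Finset.mem_range.2 (pow_pos (by norm_num) n)⟩
  set M : ℕ → ℝ :=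
    fun n => (Finset.range (2 ^ n)).sup' (hrange n) (fun k => |ξ (n + 1, k) ω|) with hMdef
  have hM0 : ∀ n, 0 ≤ M n := by
    intro n
    simp only [hMdef]
    exact le_trans (abs_nonneg (ξ (n + 1, 0) ω))
      (Finset.le_sup' (fun k => |ξ (n + 1, k) ω|)
        (Finset.mem_range.2 (by positivity : 0 < 2 ^ n)))
  set w : ℕ → ℝ := fun n => C * r ^ n * M n with hwdef
  have hw0 : ∀ n, 0 ≤ w n := fun n => mul_nonneg (by positivity) (hM0 n)
  have hkey : ∀ (n : ℕ) (t : ℝ),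
      |∑ k ∈ Finset.range (2 ^ n), Phi Γ α (n + 1) k t * ξ (n + 1, k) ω| ≤ w n := by
    intro n t
    calc |∑ k ∈ Finset.range (2 ^ n), Phi Γ α (n + 1) k t * ξ (n + 1, k) ω|
        ≤ ∑ k ∈ Finset.range (2 ^ n), |Phi Γ α (n + 1) k t * ξ (n + 1, k) ω| :=
          Finset.abs_sum_le_sum_abs _ _
      _ ≤ ∑ k ∈ Finset.range (2 ^ n), Phi Γ α (n + 1) k t * M n := by
          apply Finset.sum_le_sum
          intro k hk
          rw [abs_mul, abs_of_nonneg (phi_nonneg Γ hα (Nat.succ_ne_zero n) k t)]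
          have hle : |ξ (n + 1, k) ω| ≤ M n := by
            simp only [hMdef]
            exact Finset.le_sup' (fun k => |ξ (n + 1, k) ω|) hk
          exact mul_le_mul_of_nonneg_left hle
            (phi_nonneg Γ hα (Nat.succ_ne_zero n) k t)
      _ = (∑ k ∈ Finset.range (2 ^ n), Phi Γ α (n + 1) k t) * M n := by
          rw [Finset.sum_mul]
      _ ≤ (C * r ^ n) * M n :=
          mul_le_mul_of_nonneg_right (sum_phi_le Γ hΓ hα n t) (hM0 n)
      _ = w n := rfl
  have hr1 : ‖r‖ < 1 := by
    rw [hrdef, Real.norm_eq_abs, abs_of_nonneg (by positivity)]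
    have h12 : (1:ℝ) < Real.sqrt 2 := by
      rw [show (1:ℝ) = Real.sqrt 1 from Real.sqrt_one.symm]
      exact Real.sqrt_lt_sqrt (by norm_num) (by norm_num)
    exact inv_lt_one_of_one_lt₀ h12
  have hg : Summable (fun m : ℕ => 4 * C * ((m:ℝ) + 1) * r ^ m) := by
    have h2 := summable_pow_mul_geometric_of_norm_lt_one 1 hr1
    have h3 := summable_geometric_of_norm_lt_one hr1
    have h1 : Summable (fun m : ℕ => ((m:ℝ) + 1) * r ^ m) :=
      (h2.add h3).congr (fun m => by push_cast; ring)
    exact (h1.mul_left (4 * C)).congr (fun m => by ring)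
  have hwsum : Summable w := by
    rw [← summable_nat_add_iff N0]
    apply Summable.of_nonneg_of_le (fun n => hw0 _) _ ((summable_nat_add_iff N0).2 hg)
    intro n
    have h1 : M (n + N0) ≤ aseq (n + N0) := by
      simp only [hMdef]
      exact Finset.sup'_le _ _ (fun k hk => hξle _ (by omega) k (Finset.mem_range.1 hk))
    have h2 : aseq (n + N0) ≤ 4 * (((n + N0 : ℕ) : ℝ) + 1) := by
      simp only [haseq]
      have hs : Real.sqrt (((n + N0 : ℕ) : ℝ) + 1) ≤ ((n + N0 : ℕ) : ℝ) + 1 := by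
        rw [show Real.sqrt (((n + N0 : ℕ) : ℝ) + 1) ≤ ((n + N0 : ℕ) : ℝ) + 1 ↔
            (((n + N0 : ℕ) : ℝ) + 1) ≤ (((n + N0 : ℕ) : ℝ) + 1) ^ 2 from
          Real.sqrt_le_left (by positivity)]
        nlinarith [show (0:ℝ) ≤ ((n + N0 : ℕ) : ℝ) from Nat.cast_nonneg _]
      linarith
    calc w (n + N0) = C * r ^ (n + N0) * M (n + N0) := rfl
      _ ≤ C * r ^ (n + N0) * (4 * (((n + N0 : ℕ) : ℝ) + 1)) :=
          mul_le_mul_of_nonneg_left (h1.trans h2) (by positivity)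
      _ = 4 * C * (((n + N0 : ℕ) : ℝ) + 1) * r ^ (n + N0) := by ring
  constructor
  · refine Summable.of_nonneg_of_le (fun n => ?_) (fun n => ?_) hwsum
    · exact Real.iSup_nonneg fun t => Real.iSup_nonneg fun _ => abs_nonneg _
    · exact Real.iSup_le (fun t => Real.iSup_le (fun _ => hkey n t) (hw0 n)) (hw0 n)
  · set K0 : ℝ :=
      Real.sqrt (Γ / α) * Real.exp (-α / 2) * Real.sinh α / Real.sqrt (Real.sinh α) with hK0
    set u : ℕ → ℝ := fun n => if n = 0 then K0 * |ξ (0, 0) ω| else w (n - 1) with hu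
    have husum : Summable u := by
      rw [← summable_nat_add_iff 1]
      exact Summable.congr hwsum (fun n => by simp [hu])
    have hb : ∀ (n : ℕ) (t : ℝ), t ∈ Set.Icc (0:ℝ) 1 →
        ‖∑ k ∈ Finset.range (2 ^ (n - 1)), Phi Γ α n k t * ξ (n, k) ω‖ ≤ u n := by
      intro n t ht
      cases n with
      | zero =>
          rw [show (2 : ℕ) ^ (0 - 1) = 1 from rfl, Finset.sum_range_one,
            Real.norm_eq_abs, abs_mul]
          simp only [hu, if_pos rfl]
          exact mul_le_mul_of_nonneg_right (phi0_le Γ hΓ hα ht) (abs_nonneg _)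
      | succ m =>
          rw [Real.norm_eq_abs]
          simpa [hu] using hkey m t
    have hTU := tendstoUniformlyOn_tsum_nat husum hb
    refine ⟨fun t => ∑' n, ∑ k ∈ Finset.range (2 ^ (n - 1)), Phi Γ α n k t * ξ (n, k) ω,
      ?_, ?_⟩
    · apply hTU.continuousOn
      apply Filter.Frequently.of_forall
      intro N
      apply Continuous.continuousOn
      apply continuous_finset_sum
      intro n _
      apply continuous_finset_sum
      intro k _
      exact (phi_continuous Γ hα n k).mul continuous_const
    · exact fun v hv => (Filter.tendsto_add_atTop_nat 1).eventually (hTU v hv)
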